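/- For M = {A, B} with A = diag(2,1,1) and B = [[0,1,1],[0,1,1],[0,1,1]]: the norms ‖B Aᵗ‖ are uniformly bounded in t, and the second coordinate of any trajectory starting from e = (1,1,1)ᵀ is nondecreasing; hence ρ̃_e(M) = ρ̃(M) = 1. -/

import Mathlib

open Matrix Filter

noncomputable section

/-- Discrete-time switched trajectory: x(t) = A_{σ(t)} ⋯ A_{σ(1)} x. -/
def traj {d : ℕ} (σ : ℕ → Matrix (Fin d) (Fin d) ℝ) (x : EuclideanSpace ℝ (Fin d)) :
    ℕ → EuclideanSpace ℝ (Fin d)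
  | 0 => x
  | t + 1 => (WithLp.toLp 2 ((σ (t + 1)).mulVec (traj σ x t)) : EuclideanSpace ℝ (Fin d))

/-- Pointwise stabilization radius at x. -/
def stabRadAt {d : ℕ} (M : Set (Matrix (Fin d) (Fin d) ℝ)) (x : EuclideanSpace ℝ (Fin d)) : ℝ :=
  sInf {lam : ℝ | 0 ≤ lam ∧ ∃ σ : ℕ → Matrix (Fin d) (Fin d) ℝ, (∀ t, σ t ∈ M) ∧
    ∃ C > 0, ∀ t : ℕ, ‖traj σ x t‖ ≤ C * lam ^ t * ‖x‖}

/-- Pointwise stabilization radius. -/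
def stabRad {d : ℕ} (M : Set (Matrix (Fin d) (Fin d) ℝ)) : ℝ :=
  ⨆ x : EuclideanSpace ℝ (Fin d), stabRadAt M x

/-- The set of products of exactly t matrices from M. -/
def prodSet {d : ℕ} (M : Set (Matrix (Fin d) (Fin d) ℝ)) (t : ℕ) :
    Set (Matrix (Fin d) (Fin d) ℝ) :=
  {P | ∃ A : Fin t → Matrix (Fin d) (Fin d) ℝ, (∀ i, A i ∈ M) ∧ P = (List.ofFn A).prod}
/-- A = diag(2,1,1). -/
def Amat : Matrix (Fin 3) (Fin 3) ℝ := !![2, 0, 0; 0, 1, 0; 0, 0, 1]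

/-- B = [[0,1,1],[0,1,1],[0,1,1]]. -/
def Bmat : Matrix (Fin 3) (Fin 3) ℝ := !![0, 1, 1; 0, 1, 1; 0, 1, 1]

/-- The all-ones vector e = (1,1,1)ᵀ. -/
def eVec : EuclideanSpace ℝ (Fin 3) := WithLp.toLp 2 (fun _ : Fin 3 => (1 : ℝ))

/-! ### Auxiliary lemmas -/

lemma BA_eq : Bmat * Amat = Bmat := by
  ext i j; fin_cases i <;> fin_cases j <;>
    simp [Amat, Bmat, Matrix.mul_apply, Fin.sum_univ_three, Matrix.cons_val_zero,
      Matrix.cons_val_one, Matrix.cons_val_two, Matrix.vecHead, Matrix.vecTail]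

lemma BApow (t : ℕ) : Bmat * Amat ^ t = Bmat := by
  induction t with
  | zero => simp
  | succ t ih => rw [pow_succ, ← mul_assoc, ih, BA_eq]

lemma A_mulVec (v : Fin 3 → ℝ) : Amat.mulVec v = ![2 * v 0, v 1, v 2] := by
  funext i; fin_cases i <;>
    simp [Amat, Matrix.mulVec, dotProduct, Fin.sum_univ_three, Matrix.cons_val_zero,
      Matrix.cons_val_one, Matrix.cons_val_two, Matrix.vecHead, Matrix.vecTail]

lemma B_mulVec (v : Fin 3 → ℝ) : Bmat.mulVec v = fun _ => v 1 + v 2 := by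
  funext i; fin_cases i <;>
    simp [Bmat, Matrix.mulVec, dotProduct, Fin.sum_univ_three, Matrix.cons_val_zero,
      Matrix.cons_val_one, Matrix.cons_val_two, Matrix.vecHead, Matrix.vecTail]

lemma traj_succ {d : ℕ} (σ : ℕ → Matrix (Fin d) (Fin d) ℝ) (x : EuclideanSpace ℝ (Fin d))
    (t : ℕ) : (traj σ x (t + 1) : Fin d → ℝ) = (σ (t + 1)).mulVec (traj σ x t) := rfl

lemma abs_apply_le_norm (x : EuclideanSpace ℝ (Fin 3)) (i : Fin 3) : |x i| ≤ ‖x‖ := by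
  rw [EuclideanSpace.norm_eq]
  have h : |x i| = Real.sqrt (‖x i‖ ^ 2) := by
    rw [Real.sqrt_sq_eq_abs, Real.norm_eq_abs, abs_abs]
  rw [h]
  exact Real.sqrt_le_sqrt (Finset.single_le_sum (f := fun j => ‖x j‖ ^ 2)
    (fun _ _ => sq_nonneg _) (Finset.mem_univ i))

lemma norm_le_sqrt3 (x : EuclideanSpace ℝ (Fin 3)) (M : ℝ) (h : ∀ i, |x i| ≤ M) :
    ‖x‖ ≤ Real.sqrt 3 * M := by
  have hM : 0 ≤ M := le_trans (abs_nonneg _) (h 0)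
  rw [EuclideanSpace.norm_eq]
  have hsum : ∑ j, ‖x j‖ ^ 2 ≤ 3 * M ^ 2 := by
    have h0 := abs_le.mp (h 0); have h1 := abs_le.mp (h 1); have h2 := abs_le.mp (h 2)
    rw [Fin.sum_univ_three]
    simp only [Real.norm_eq_abs, sq_abs]
    nlinarith [h0.1, h0.2, h1.1, h1.2, h2.1, h2.2]
  calc Real.sqrt (∑ j, ‖x j‖ ^ 2) ≤ Real.sqrt (3 * M ^ 2) := Real.sqrt_le_sqrt hsum
    _ = Real.sqrt 3 * M := by
        rw [Real.sqrt_mul (by norm_num), Real.sqrt_sq hM]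

lemma norm_eVec_le : ‖eVec‖ ≤ Real.sqrt 3 := by
  have := norm_le_sqrt3 eVec 1 (fun i => by simp [eVec])
  simpa using this

/-- The periodic switching law: apply B at multiples of m, A otherwise. -/
def sig (m : ℕ) : ℕ → Matrix (Fin 3) (Fin 3) ℝ := fun t => if m ∣ t then Bmat else Amat

lemma sig_mem (m t : ℕ) : sig m t ∈ ({Amat, Bmat} : Set (Matrix (Fin 3) (Fin 3) ℝ)) := by
  unfold sig; split <;> simp

lemma traj_coord_bound (m : ℕ) (hm : 0 < m) (x : EuclideanSpace ℝ (Fin 3)) (t : ℕ) :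
    |(traj (sig m) x t : Fin 3 → ℝ) 1| ≤ 2 ^ (t / m) * ‖x‖ ∧
    |(traj (sig m) x t : Fin 3 → ℝ) 2| ≤ 2 ^ (t / m) * ‖x‖ ∧
    |(traj (sig m) x t : Fin 3 → ℝ) 0| ≤ 2 ^ (t % m) * (2 ^ (t / m) * ‖x‖) := by
  induction t with
  | zero =>
      simp only [Nat.zero_div, Nat.zero_mod, pow_zero, one_mul]
      exact ⟨abs_apply_le_norm x 1, abs_apply_le_norm x 2, abs_apply_le_norm x 0⟩
  | succ t ih =>
      obtain ⟨h1, h2, h0⟩ := ih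
      set y : Fin 3 → ℝ := (traj (sig m) x t : Fin 3 → ℝ) with hy
      have hxnn : (0:ℝ) ≤ ‖x‖ := norm_nonneg x
      have hq1 : (1:ℝ) ≤ 2 ^ (t / m) := one_le_pow₀ (by norm_num : (1:ℝ) ≤ 2)
      by_cases hd : m ∣ (t + 1)
      · have hσ : sig m (t + 1) = Bmat := if_pos hd
        have hT : (traj (sig m) x (t + 1) : Fin 3 → ℝ) = fun _ => y 1 + y 2 := by
          rw [traj_succ, hσ, B_mulVec]
        have hdiv : (t + 1) / m = t / m + 1 := by
          rw [Nat.succ_div, if_pos hd]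
        have hmod : (t + 1) % m = 0 := by
          obtain ⟨k, hk⟩ := hd; simp [hk, Nat.mul_mod_right]
        have habs : |y 1 + y 2| ≤ 2 ^ (t / m + 1) * ‖x‖ := by
          calc |y 1 + y 2| ≤ |y 1| + |y 2| := abs_add_le _ _
            _ ≤ 2 ^ (t / m) * ‖x‖ + 2 ^ (t / m) * ‖x‖ := add_le_add h1 h2
            _ = 2 ^ (t / m + 1) * ‖x‖ := by ring
        rw [hT, hdiv, hmod]
        exact ⟨habs, habs, by simpa using habs⟩
      · have hσ : sig m (t + 1) = Amat := if_neg hd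
        have hT : (traj (sig m) x (t + 1) : Fin 3 → ℝ) = ![2 * y 0, y 1, y 2] := by
          rw [traj_succ, hσ, A_mulVec]
        have hdiv : (t + 1) / m = t / m := by
          rw [Nat.succ_div, if_neg hd, add_zero]
        have hlt : t % m + 1 < m := by
          have h1' : t % m < m := Nat.mod_lt t hm
          rcases Nat.lt_or_ge (t % m + 1) m with h | h
          · exact h
          · exfalso
            have heq : t % m + 1 = m := by omega
            apply hd
            refine ⟨t / m + 1, ?_⟩
            have hdm := Nat.div_add_mod t m
            have hmul : m * (t / m + 1) = m * (t / m) + m := by ring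
            omega
        have hmod : (t + 1) % m = t % m + 1 := by
          rw [Nat.add_mod, Nat.mod_eq_of_lt (show (1:ℕ) < m by omega),
            Nat.mod_eq_of_lt hlt]
        rw [hT, hdiv, hmod]
        refine ⟨by simpa using h1, by simpa using h2, ?_⟩
        have : |(2:ℝ) * y 0| = 2 * |y 0| := by
          rw [abs_mul]; norm_num
        simp only [Matrix.cons_val_zero]
        rw [this, pow_succ]
        calc 2 * |y 0| ≤ 2 * (2 ^ (t % m) * (2 ^ (t / m) * ‖x‖)) := by linarith
          _ = 2 ^ (t % m) * 2 * (2 ^ (t / m) * ‖x‖) := by ring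

lemma traj_norm_bound (m : ℕ) (hm : 0 < m) (lam : ℝ) (hl1 : 1 ≤ lam) (hl2 : 2 ≤ lam ^ m)
    (x : EuclideanSpace ℝ (Fin 3)) (t : ℕ) :
    ‖traj (sig m) x t‖ ≤ (Real.sqrt 3 * 2 ^ m) * lam ^ t * ‖x‖ := by
  obtain ⟨h1, h2, h0⟩ := traj_coord_bound m hm x t
  have hxnn : (0:ℝ) ≤ ‖x‖ := norm_nonneg x
  have hq1 : (1:ℝ) ≤ 2 ^ (t / m) := one_le_pow₀ (by norm_num : (1:ℝ) ≤ 2)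
  have hr : (2:ℝ) ^ (t % m) ≤ 2 ^ m :=
    pow_le_pow_right₀ (by norm_num) (Nat.mod_lt t hm).le
  have hm1 : (1:ℝ) ≤ 2 ^ m := one_le_pow₀ (by norm_num : (1:ℝ) ≤ 2)
  have key : ∀ i, |(traj (sig m) x t : Fin 3 → ℝ) i| ≤ 2 ^ m * (2 ^ (t / m) * ‖x‖) := by
    intro i
    have hnn : (0:ℝ) ≤ 2 ^ (t / m) * ‖x‖ := by positivity
    fin_cases i
    · exact h0.trans (by nlinarith)
    · exact h1.trans (by nlinarith)
    · exact h2.trans (by nlinarith)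
  have h2q : (2:ℝ) ^ (t / m) ≤ lam ^ t := by
    calc (2:ℝ) ^ (t / m) ≤ (lam ^ m) ^ (t / m) := pow_le_pow_left₀ (by norm_num) hl2 _
      _ = lam ^ (m * (t / m)) := (pow_mul lam m (t / m)).symm
      _ ≤ lam ^ t := pow_le_pow_right₀ hl1 (by
          rw [mul_comm]; exact Nat.div_mul_le_self t m)
  calc ‖traj (sig m) x t‖ ≤ Real.sqrt 3 * (2 ^ m * (2 ^ (t / m) * ‖x‖)) :=
        norm_le_sqrt3 _ _ key
    _ = (Real.sqrt 3 * 2 ^ m) * (2 ^ (t / m) * ‖x‖) := by ring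
    _ ≤ (Real.sqrt 3 * 2 ^ m) * (lam ^ t * ‖x‖) := by
        have h3 : (0:ℝ) ≤ Real.sqrt 3 * 2 ^ m := by positivity
        have h5 : (2:ℝ) ^ (t / m) * ‖x‖ ≤ lam ^ t * ‖x‖ :=
          mul_le_mul_of_nonneg_right h2q hxnn
        exact mul_le_mul_of_nonneg_left h5 h3
    _ = (Real.sqrt 3 * 2 ^ m) * lam ^ t * ‖x‖ := by ring

/-- Every lam > 1 belongs to the stabilization set of every x. -/
lemma mem_S {x : EuclideanSpace ℝ (Fin 3)} {lam : ℝ} (h : 1 < lam) :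
    lam ∈ {lam : ℝ | 0 ≤ lam ∧ ∃ σ : ℕ → Matrix (Fin 3) (Fin 3) ℝ,
      (∀ t, σ t ∈ ({Amat, Bmat} : Set (Matrix (Fin 3) (Fin 3) ℝ))) ∧
      ∃ C > 0, ∀ t : ℕ, ‖traj σ x t‖ ≤ C * lam ^ t * ‖x‖} := by
  obtain ⟨m, hm2⟩ := pow_unbounded_of_one_lt (2:ℝ) h
  have hm : 0 < m := by
    rcases Nat.eq_zero_or_pos m with h0 | h0
    · exfalso; rw [h0, pow_zero] at hm2; linarith
    · exact h0
  refine ⟨by linarith, sig m, sig_mem m, Real.sqrt 3 * 2 ^ m, by positivity, ?_⟩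
  exact traj_norm_bound m hm lam h.le hm2.le x

/-- Coordinates 1 and 2 of any trajectory from e stay ≥ 1. -/
lemma traj_invariant (σ : ℕ → Matrix (Fin 3) (Fin 3) ℝ)
    (hσ : ∀ t, σ t ∈ ({Amat, Bmat} : Set (Matrix (Fin 3) (Fin 3) ℝ))) (t : ℕ) :
    1 ≤ (traj σ eVec t : Fin 3 → ℝ) 1 ∧ 1 ≤ (traj σ eVec t : Fin 3 → ℝ) 2 := by
  induction t with
  | zero => exact ⟨le_refl (1:ℝ), le_refl (1:ℝ)⟩
  | succ t ih =>
      obtain ⟨i1, i2⟩ := ih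
      rcases hσ (t + 1) with hA | hB
      · have hT : (traj σ eVec (t + 1) : Fin 3 → ℝ)
            = ![2 * (traj σ eVec t : Fin 3 → ℝ) 0, (traj σ eVec t : Fin 3 → ℝ) 1,
               (traj σ eVec t : Fin 3 → ℝ) 2] := by
          rw [traj_succ, hA, A_mulVec]
        rw [hT]; exact ⟨by simpa using i1, by simpa using i2⟩
      · rw [Set.mem_singleton_iff] at hB
        have hT : (traj σ eVec (t + 1) : Fin 3 → ℝ)
            = fun _ => (traj σ eVec t : Fin 3 → ℝ) 1 + (traj σ eVec t : Fin 3 → ℝ) 2 := by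
          rw [traj_succ, hB, B_mulVec]
        rw [hT]; constructor <;> · simp only; linarith

lemma S_lower {lam : ℝ}
    (h : lam ∈ {lam : ℝ | 0 ≤ lam ∧ ∃ σ : ℕ → Matrix (Fin 3) (Fin 3) ℝ,
      (∀ t, σ t ∈ ({Amat, Bmat} : Set (Matrix (Fin 3) (Fin 3) ℝ))) ∧
      ∃ C > 0, ∀ t : ℕ, ‖traj σ eVec t‖ ≤ C * lam ^ t * ‖eVec‖}) : 1 ≤ lam := by
  obtain ⟨h0, σ, hσ, C, hC, hb⟩ := h
  by_contra hlt
  push_neg at hlt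
  have hnorm : ∀ t, 1 ≤ ‖traj σ eVec t‖ := fun t =>
    le_trans (le_trans (traj_invariant σ hσ t).1 (le_abs_self _))
      (abs_apply_le_norm (traj σ eVec t) 1)
  have hs3 : (0:ℝ) < Real.sqrt 3 := by positivity
  obtain ⟨n, hn⟩ := exists_pow_lt_of_lt_one
    (show (0:ℝ) < 1 / (C * Real.sqrt 3) by positivity) hlt
  have hbn := hb n
  have h1 : ‖traj σ eVec n‖ ≤ C * lam ^ n * Real.sqrt 3 := by
    have := norm_eVec_le
    have hCl : 0 ≤ C * lam ^ n := by positivity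
    nlinarith [hnorm n]
  have h2 : C * lam ^ n * Real.sqrt 3 < 1 := by
    have hpos : (0:ℝ) < C * Real.sqrt 3 := by positivity
    calc C * lam ^ n * Real.sqrt 3 = (C * Real.sqrt 3) * lam ^ n := by ring
      _ < (C * Real.sqrt 3) * (1 / (C * Real.sqrt 3)) :=
          mul_lt_mul_of_pos_left hn hpos
      _ = 1 := by field_simp
  linarith [hnorm n]

/-- the norms ‖BAᵗ‖ are uniformly bounded in t, the second
coordinate of any trajectory from e is nondecreasing, and consequently
ρ̃ₑ(M) = ρ̃(M) = 1 for M = {A, B}. -/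
theorem stmt9 :
    (∃ C : ℝ, ∀ t : ℕ, ‖Matrix.toEuclideanCLM (𝕜 := ℝ) (Bmat * Amat ^ t)‖ ≤ C) ∧
    (∀ σ : ℕ → Matrix (Fin 3) (Fin 3) ℝ, (∀ t, σ t ∈ ({Amat, Bmat} : Set _)) →
      Monotone fun t : ℕ => (traj σ eVec t : Fin 3 → ℝ) 1) ∧
    stabRadAt {Amat, Bmat} eVec = 1 ∧ stabRad {Amat, Bmat} = 1 := by
  have hle1 : ∀ x : EuclideanSpace ℝ (Fin 3), stabRadAt ({Amat, Bmat} : Set _) x ≤ 1 := by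
    intro x
    show sInf _ ≤ 1
    apply le_of_forall_gt_imp_ge_of_dense
    intro lam hl
    exact csInf_le ⟨0, fun μ hμ => hμ.1⟩ (mem_S hl)
  have heq : stabRadAt ({Amat, Bmat} : Set _) eVec = 1 := by
    refine le_antisymm (hle1 eVec) ?_
    show (1:ℝ) ≤ sInf _
    exact le_csInf ⟨2, mem_S one_lt_two⟩ (fun lam hlam => S_lower hlam)
  refine ⟨⟨‖Matrix.toEuclideanCLM (𝕜 := ℝ) Bmat‖, fun t => by rw [BApow]⟩, ?_, heq, ?_⟩
  · intro σ hσ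
    apply monotone_nat_of_le_succ
    intro t
    show (traj σ eVec t : Fin 3 → ℝ) 1 ≤ (traj σ eVec (t + 1) : Fin 3 → ℝ) 1
    obtain ⟨i1, i2⟩ := traj_invariant σ hσ t
    rcases hσ (t + 1) with hA | hB
    · have hT : (traj σ eVec (t + 1) : Fin 3 → ℝ)
          = ![2 * (traj σ eVec t : Fin 3 → ℝ) 0, (traj σ eVec t : Fin 3 → ℝ) 1,
             (traj σ eVec t : Fin 3 → ℝ) 2] := by
        rw [traj_succ, hA, A_mulVec]
      rw [hT]; simp
    · rw [Set.mem_singleton_iff] at hB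
      have hT : (traj σ eVec (t + 1) : Fin 3 → ℝ)
          = fun _ => (traj σ eVec t : Fin 3 → ℝ) 1 + (traj σ eVec t : Fin 3 → ℝ) 2 := by
        rw [traj_succ, hB, B_mulVec]
      rw [hT]; simp only; linarith
  · have hub : BddAbove (Set.range fun x : EuclideanSpace ℝ (Fin 3) =>
        stabRadAt ({Amat, Bmat} : Set _) x) := ⟨1, by rintro μ ⟨x, rfl⟩; exact hle1 x⟩
    refine le_antisymm (ciSup_le hle1) ?_
    calc (1:ℝ) = stabRadAt ({Amat, Bmat} : Set _) eVec := heq.symm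
      _ ≤ ⨆ x : EuclideanSpace ℝ (Fin 3), stabRadAt ({Amat, Bmat} : Set _) x := le_ciSup hub eVec
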